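/- Let K₁ = M(n,R,Σ) and K₂ = M(n,R,Σ') be two (01)-formal matrix rings of the form K₀ over the same ring R (i.e., their multipliers satisfy: s_ijk = 0 whenever i,j,k are pairwise distinct and s_iji = 0 = s_jkj). If their principal multiplier matrices coincide, i.e., s_iji = s'_iji for all i,j, then Σ = Σ' (all multipliers coincide), and hence K₁ = K₂ as rings. -/
import Mathlib

private lemma aux01 {R : Type*} [Ring R] [Nontrivial R] {x y : R}
    (hx : x = 0 ∨ x = 1) (h : x * y = 1) : x = 1 := by
  rcases hx with hx | hx
  · exfalso; rw [hx, zero_mul] at h; exact zero_ne_one h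
  · exact hx

/-- Two (01)-multiplier systems of the form `K₀` over the same ring
with the same principal multiplier matrix coincide entirely (hence define the
same formal matrix ring). -/
theorem K0_determined_by_principal_matrix {R : Type*} [Ring R] [Nontrivial R] (n : ℕ)
    (s s' : Fin n → Fin n → Fin n → R)
    (hcent : ∀ i j k (r : R), s i j k * r = r * s i j k)
    (h1 : ∀ i k, s i i k = 1) (h2 : ∀ i k, s i k k = 1)
    (hmul : ∀ i j k l, s i j k * s i k l = s i j l * s j k l)
    (h01 : ∀ i j k, s i j k = 0 ∨ s i j k = 1)
    (hK0 : ∀ i j k : Fin n, i ≠ j → j ≠ k → i ≠ k →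
      s i j i = 0 → s j k j = 0 → s i j k = 0)
    (hcent' : ∀ i j k (r : R), s' i j k * r = r * s' i j k)
    (h1' : ∀ i k, s' i i k = 1) (h2' : ∀ i k, s' i k k = 1)
    (hmul' : ∀ i j k l, s' i j k * s' i k l = s' i j l * s' j k l)
    (h01' : ∀ i j k, s' i j k = 0 ∨ s' i j k = 1)
    (hK0' : ∀ i j k : Fin n, i ≠ j → j ≠ k → i ≠ k →
      s' i j i = 0 → s' j k j = 0 → s' i j k = 0)
    (hprin : ∀ i j, s i j i = s' i j i) :
    s = s' := by
  funext i j k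
  by_cases hij : i = j
  · subst hij; rw [h1, h1']
  by_cases hjk : j = k
  · subst hjk; rw [h2, h2']
  by_cases hik : i = k
  · subst hik; exact hprin i j
  -- pairwise distinct case
  -- key: s i j i = 1 → s i j k = 1
  have key : ∀ (t : Fin n → Fin n → Fin n → R)
      (h1t : ∀ i k, t i i k = 1) (h2t : ∀ i k, t i k k = 1)
      (hmult : ∀ i j k l, t i j k * t i k l = t i j l * t j k l)
      (h01t : ∀ i j k, t i j k = 0 ∨ t i j k = 1),
      (t i j i = 1 ∨ t j k j = 1) → t i j k = 1 := by
    intro t h1t h2t hmult h01t hor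
    rcases hor with h | h
    · have := hmult i j i k
      rw [h, h1t, one_mul] at this
      exact aux01 (h01t i j k) this.symm
    · have := hmult i j k j
      rw [h2t, one_mul, h] at this
      exact aux01 (h01t i j k) this
  rcases h01 i j i with hp | hp
  · rcases h01 j k j with hq | hq
    · rw [hK0 i j k hij hjk hik hp hq,
        hK0' i j k hij hjk hik (hprin i j ▸ hp) (hprin j k ▸ hq)]
    · rw [key s h1 h2 hmul h01 (Or.inr hq),
        key s' h1' h2' hmul' h01' (Or.inr (hprin j k ▸ hq))]
  · rw [key s h1 h2 hmul h01 (Or.inl hp),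
      key s' h1' h2' hmul' h01' (Or.inl (hprin i j ▸ hp))]
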